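/- Let K be a compact subset of SL(2,ℂ) and M > 0. Then there exists N > 0 such that for all B, C ∈ K and all z ∈ ℂ with |z| ≤ M, ‖B·A(z)·B⁻¹ − C·A(z)·C⁻¹‖ ≤ N·‖B − C‖·|z|, where A(z) = diag(e^{z/2}, e^{−z/2}). -/

import Mathlib

/-- The norm `‖[[a,b],[c,d]]‖ = max (|a|+|b|) (|c|+|d|)` on 2×2 complex matrices. -/
noncomputable def mnorm (A : Matrix (Fin 2) (Fin 2) ℂ) : ℝ :=
  max (‖A 0 0‖ + ‖A 0 1‖) (‖A 1 0‖ + ‖A 1 1‖)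

/-- `A(z) = diag (e^{z/2}, e^{-z/2})`, the isometry with axis `(0,∞)` and complex
displacement `z`. -/
noncomputable def Amat (z : ℂ) : Matrix (Fin 2) (Fin 2) ℂ :=
  !![Complex.exp (z / 2), 0; 0, Complex.exp (-z / 2)]

lemma mnorm_nonneg (A : Matrix (Fin 2) (Fin 2) ℂ) : 0 ≤ mnorm A :=
  le_max_iff.2 (Or.inl (by positivity))

lemma mnorm_add_le (X Y : Matrix (Fin 2) (Fin 2) ℂ) :
    mnorm (X + Y) ≤ mnorm X + mnorm Y := by
  unfold mnorm
  simp only [Matrix.add_apply]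
  have tri : ∀ a b : ℂ, ‖a + b‖ ≤ ‖a‖ + ‖b‖ :=
    fun a b => norm_add_le a b
  apply max_le
  · have h1 := le_max_left (‖X 0 0‖ + ‖X 0 1‖)
      (‖X 1 0‖ + ‖X 1 1‖)
    have h2 := le_max_left (‖Y 0 0‖ + ‖Y 0 1‖)
      (‖Y 1 0‖ + ‖Y 1 1‖)
    have := tri (X 0 0) (Y 0 0); have := tri (X 0 1) (Y 0 1)
    linarith
  · have h1 := le_max_right (‖X 0 0‖ + ‖X 0 1‖)
      (‖X 1 0‖ + ‖X 1 1‖)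
    have h2 := le_max_right (‖Y 0 0‖ + ‖Y 0 1‖)
      (‖Y 1 0‖ + ‖Y 1 1‖)
    have := tri (X 1 0) (Y 1 0); have := tri (X 1 1) (Y 1 1)
    linarith

lemma mnorm_mul_le (X Y : Matrix (Fin 2) (Fin 2) ℂ) :
    mnorm (X * Y) ≤ mnorm X * mnorm Y := by
  unfold mnorm
  simp only [Matrix.mul_apply, Fin.sum_univ_two]
  have tri : ∀ a b c d : ℂ, ‖a * b + c * d‖ ≤
      ‖a‖ * ‖b‖ + ‖c‖ * ‖d‖ := fun a b c d =>
    (norm_add_le _ _).trans (by rw [norm_mul, norm_mul])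
  set a00 := ‖X 0 0‖; set a01 := ‖X 0 1‖
  set a10 := ‖X 1 0‖; set a11 := ‖X 1 1‖
  set b00 := ‖Y 0 0‖; set b01 := ‖Y 0 1‖
  set b10 := ‖Y 1 0‖; set b11 := ‖Y 1 1‖
  have hb1 : b00 + b01 ≤ max (b00 + b01) (b10 + b11) := le_max_left _ _
  have hb2 : b10 + b11 ≤ max (b00 + b01) (b10 + b11) := le_max_right _ _
  have na00 : 0 ≤ a00 := norm_nonneg _
  have na01 : 0 ≤ a01 := norm_nonneg _
  have na10 : 0 ≤ a10 := norm_nonneg _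
  have na11 : 0 ≤ a11 := norm_nonneg _
  set m1 := max (a00 + a01) (a10 + a11) with hm1
  set m2 := max (b00 + b01) (b10 + b11) with hm2
  have hm2n : 0 ≤ m2 := le_trans (by positivity) (le_max_left _ _)
  apply max_le
  · have ha : a00 + a01 ≤ m1 := le_max_left _ _
    have t1 := tri (X 0 0) (Y 0 0) (X 0 1) (Y 1 0)
    have t2 := tri (X 0 0) (Y 0 1) (X 0 1) (Y 1 1)
    calc ‖X 0 0 * Y 0 0 + X 0 1 * Y 1 0‖
          + ‖X 0 0 * Y 0 1 + X 0 1 * Y 1 1‖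
        ≤ (a00 * b00 + a01 * b10) + (a00 * b01 + a01 * b11) := add_le_add t1 t2
      _ = a00 * (b00 + b01) + a01 * (b10 + b11) := by ring
      _ ≤ a00 * m2 + a01 * m2 := add_le_add
          (mul_le_mul_of_nonneg_left hb1 na00) (mul_le_mul_of_nonneg_left hb2 na01)
      _ = (a00 + a01) * m2 := by ring
      _ ≤ m1 * m2 := mul_le_mul_of_nonneg_right ha hm2n
  · have ha : a10 + a11 ≤ m1 := le_max_right _ _
    have t1 := tri (X 1 0) (Y 0 0) (X 1 1) (Y 1 0)
    have t2 := tri (X 1 0) (Y 0 1) (X 1 1) (Y 1 1)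
    calc ‖X 1 0 * Y 0 0 + X 1 1 * Y 1 0‖
          + ‖X 1 0 * Y 0 1 + X 1 1 * Y 1 1‖
        ≤ (a10 * b00 + a11 * b10) + (a10 * b01 + a11 * b11) := add_le_add t1 t2
      _ = a10 * (b00 + b01) + a11 * (b10 + b11) := by ring
      _ ≤ a10 * m2 + a11 * m2 := add_le_add
          (mul_le_mul_of_nonneg_left hb1 na10) (mul_le_mul_of_nonneg_left hb2 na11)
      _ = (a10 + a11) * m2 := by ring
      _ ≤ m1 * m2 := mul_le_mul_of_nonneg_right ha hm2n

lemma mnorm_mul3_le (X Y Z : Matrix (Fin 2) (Fin 2) ℂ) :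
    mnorm (X * Y * Z) ≤ mnorm X * mnorm Y * mnorm Z :=
  (mnorm_mul_le _ _).trans
    (mul_le_mul_of_nonneg_right (mnorm_mul_le _ _) (mnorm_nonneg _))

lemma mnorm_adjugate_le (X : Matrix (Fin 2) (Fin 2) ℂ) :
    mnorm X.adjugate ≤ 2 * mnorm X := by
  rw [Matrix.adjugate_fin_two]
  unfold mnorm
  simp [Matrix.cons_val_zero, Matrix.cons_val_one, Matrix.head_cons, norm_neg]
  have h1 := le_max_left (‖X 0 0‖ + ‖X 0 1‖)
    (‖X 1 0‖ + ‖X 1 1‖)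
  have h2 := le_max_right (‖X 0 0‖ + ‖X 0 1‖)
    (‖X 1 0‖ + ‖X 1 1‖)
  have n1 : 0 ≤ ‖X 0 0‖ := norm_nonneg _
  have n2 : 0 ≤ ‖X 0 1‖ := norm_nonneg _
  have n3 : 0 ≤ ‖X 1 0‖ := norm_nonneg _
  have n4 : 0 ≤ ‖X 1 1‖ := norm_nonneg _
  refine ⟨by linarith, by linarith⟩

lemma abs_exp_sub_one_le (w : ℂ) :
    ‖Complex.exp w - 1‖ ≤ Real.exp (‖w‖) * ‖w‖ := by
  have := Convex.norm_image_sub_le_of_norm_deriv_le (𝕜 := ℂ)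
    (f := Complex.exp) (s := Metric.closedBall (0 : ℂ) (‖w‖))
    (C := Real.exp (‖w‖)) (x := 0) (y := w)
    (fun x _ => Complex.differentiable_exp x)
    (fun x hx => by
      have h1 : ‖x‖ ≤ ‖w‖ := by
        simpa [Complex.dist_eq] using Metric.mem_closedBall.1 hx
      have h2 : x.re ≤ ‖w‖ := le_trans (Complex.re_le_norm x) h1
      rw [Complex.deriv_exp, Complex.norm_exp]
      exact Real.exp_le_exp.2 h2)
    (convex_closedBall _ _)
    (Metric.mem_closedBall_self (norm_nonneg _))
    (by simp [Metric.mem_closedBall, Complex.dist_eq])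
  simpa [Complex.exp_zero] using this

/-- Let `K` be a compact subset of `SL(2,ℂ)` and `M > 0`. Then there is `N > 0`
such that for all `B, C ∈ K` and all `z` with `|z| ≤ M`,
`‖B·A(z)·B⁻¹ − C·A(z)·C⁻¹‖ ≤ N·‖B − C‖·|z|`. -/
theorem conjugated_displacement_estimate
    (K : Set (Matrix (Fin 2) (Fin 2) ℂ)) (hK : IsCompact K)
    (hdet : ∀ A ∈ K, A.det = 1) (M : ℝ) (hM : 0 < M) :
    ∃ N > 0, ∀ B ∈ K, ∀ C ∈ K, ∀ z : ℂ, ‖z‖ ≤ M →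
      mnorm (B * Amat z * B⁻¹ - C * Amat z * C⁻¹) ≤ N * mnorm (B - C) * ‖z‖ := by
  -- bound on K
  have hcont : Continuous mnorm := by
    unfold mnorm
    have h : ∀ i j : Fin 2, Continuous fun A : Matrix (Fin 2) (Fin 2) ℂ =>
        ‖A i j‖ := fun i j =>
      continuous_norm.comp ((continuous_apply j).comp (continuous_apply i))
    exact ((h 0 0).add (h 0 1)).max ((h 1 0).add (h 1 1))
  obtain ⟨R0, hR0⟩ := hK.exists_bound_of_continuousOn hcont.continuousOn
  set R : ℝ := max R0 1 with hRdef
  have hR1 : (1 : ℝ) ≤ R := le_max_right _ _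
  have hR : ∀ X ∈ K, mnorm X ≤ R := fun X hX =>
    le_trans (le_trans (le_abs_self _) (hR0 X hX)) (le_max_left _ _)
  refine ⟨4 * R * Real.exp M, by positivity, ?_⟩
  intro B hB C hC z hz
  have hz0 : 0 ≤ ‖z‖ := norm_nonneg _
  -- invertibility and inverses as adjugates
  have hBu : IsUnit B.det := by rw [hdet B hB]; exact isUnit_one
  have hCu : IsUnit C.det := by rw [hdet C hC]; exact isUnit_one
  have hBinv : B * B⁻¹ = 1 := Matrix.mul_nonsing_inv B hBu
  have hCinv : C * C⁻¹ = 1 := Matrix.mul_nonsing_inv C hCu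
  have hinvadj : ∀ X ∈ K, X⁻¹ = X.adjugate := fun X hX => by
    rw [Matrix.inv_def, hdet X hX, Ring.inverse_one, one_smul]
  -- key algebraic identity
  set E : Matrix (Fin 2) (Fin 2) ℂ := Amat z - 1 with hE
  have hA1 : Amat z = 1 + E := by rw [hE]; abel
  have key : B * Amat z * B⁻¹ - C * Amat z * C⁻¹
      = (B - C) * E * B⁻¹ + C * E * (B⁻¹ - C⁻¹) := by
    rw [hA1]
    have e1 : B * (1 + E) * B⁻¹ = B * B⁻¹ + B * E * B⁻¹ := by noncomm_ring
    have e2 : C * (1 + E) * C⁻¹ = C * C⁻¹ + C * E * C⁻¹ := by noncomm_ring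
    rw [e1, e2, hBinv, hCinv]
    noncomm_ring
  -- difference of inverses
  have hadjsub : B⁻¹ - C⁻¹ = (B - C).adjugate := by
    rw [hinvadj B hB, hinvadj C hC, Matrix.adjugate_fin_two, Matrix.adjugate_fin_two,
      Matrix.adjugate_fin_two]
    ext i j
    fin_cases i <;> fin_cases j <;> simp [Matrix.sub_apply] <;> ring
  -- bound on E
  have hEbd : mnorm E ≤ Real.exp M * ‖z‖ := by
    have habs2 : ‖z / 2‖ = ‖z‖ / 2 := by
      rw [norm_div]; norm_num
    have habs2' : ‖-z / 2‖ = ‖z‖ / 2 := by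
      rw [neg_div, norm_neg, habs2]
    have hb : ∀ w : ℂ, ‖w‖ = ‖z‖ / 2 →
        ‖Complex.exp w - 1‖ ≤ Real.exp M * ‖z‖ := by
      intro w hw
      calc ‖Complex.exp w - 1‖
          ≤ Real.exp (‖w‖) * ‖w‖ := abs_exp_sub_one_le w
        _ ≤ Real.exp M * ‖z‖ := by
            rw [hw]
            apply mul_le_mul
            · exact Real.exp_le_exp.2 (by linarith)
            · linarith
            · linarith
            · positivity
    have h1 := hb (z / 2) habs2
    have h2 := hb (-z / 2) habs2'
    have hexpos : (0:ℝ) ≤ Real.exp M * ‖z‖ := by positivity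
    unfold mnorm
    rw [hE]
    simp only [Amat, Matrix.sub_apply, Matrix.one_apply, Matrix.cons_val', Matrix.cons_val_zero,
      Matrix.cons_val_one, Matrix.head_cons, Matrix.empty_val', Matrix.cons_val_fin_one,
      Matrix.head_fin_const]
    norm_num
    exact ⟨h1, h2⟩
  -- norms on K
  set D : ℝ := mnorm (B - C) with hD
  have hD0 : 0 ≤ D := mnorm_nonneg _
  have hE0 : 0 ≤ mnorm E := mnorm_nonneg _
  have hBinvbd : mnorm B⁻¹ ≤ 2 * R := by
    rw [hinvadj B hB]
    exact (mnorm_adjugate_le B).trans (by nlinarith [hR B hB])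
  have hCbd : mnorm C ≤ R := hR C hC
  have hadjbd : mnorm (B - C).adjugate ≤ 2 * D := mnorm_adjugate_le _
  -- assemble
  have t1 : mnorm ((B - C) * E * B⁻¹) ≤ D * mnorm E * (2 * R) :=
    (mnorm_mul3_le _ _ _).trans
      (mul_le_mul_of_nonneg_left hBinvbd (mul_nonneg hD0 hE0))
  have t2 : mnorm (C * E * (B⁻¹ - C⁻¹)) ≤ R * mnorm E * (2 * D) := by
    refine (mnorm_mul3_le _ _ _).trans ?_
    rw [hadjsub]
    apply mul_le_mul
    · exact mul_le_mul_of_nonneg_right hCbd hE0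
    · exact hadjbd
    · exact mnorm_nonneg _
    · positivity
  calc mnorm (B * Amat z * B⁻¹ - C * Amat z * C⁻¹)
      = mnorm ((B - C) * E * B⁻¹ + C * E * (B⁻¹ - C⁻¹)) := by rw [key]
    _ ≤ mnorm ((B - C) * E * B⁻¹) + mnorm (C * E * (B⁻¹ - C⁻¹)) := mnorm_add_le _ _
    _ ≤ D * mnorm E * (2 * R) + R * mnorm E * (2 * D) := add_le_add t1 t2
    _ = 4 * R * mnorm E * D := by ring
    _ ≤ 4 * R * (Real.exp M * ‖z‖) * D := by
        apply mul_le_mul_of_nonneg_right _ hD0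
        apply mul_le_mul_of_nonneg_left hEbd (by positivity)
    _ = 4 * R * Real.exp M * D * ‖z‖ := by ring
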